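/- Let ‖·‖ be a sub-multiplicative matrix norm and A, Â be square matrices with Σ_{l=0}^∞ ‖A^l‖ =: C_A < ∞ and ‖Â − A‖ · C_A < 1. Then Σ_{l=0}^∞ ‖Â^l‖ ≤ C_A / (1 − ‖Â − A‖ C_A). -/
import Mathlib


open Finset

lemma pow_expand' {R : Type*} [Ring R] (A E : R) :
    ∀ l : ℕ, (A + E) ^ l = A ^ l + ∑ i ∈ range l, A ^ i * E * (A + E) ^ (l - 1 - i) := by
  intro l
  induction l with
  | zero => simp
  | succ l ih =>
    have step : (A + E) ^ (l + 1) = A * (A + E) ^ l + E * (A + E) ^ l := by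
      rw [pow_succ', add_mul]
    rw [step]
    nth_rewrite 1 [ih]
    rw [mul_add, mul_sum,
      sum_range_succ' (fun i => A ^ i * E * (A + E) ^ (l + 1 - 1 - i))]
    have h1 : ∀ i ∈ range l, A * (A ^ i * E * (A + E) ^ (l - 1 - i))
        = A ^ (i + 1) * E * (A + E) ^ (l + 1 - 1 - (i + 1)) := by
      intro i hi
      have h2 : l + 1 - 1 - (i + 1) = l - 1 - i := by omega
      rw [h2]
      simp [pow_succ', mul_assoc]
    rw [sum_congr rfl h1]
    have h0 : A ^ 0 * E * (A + E) ^ (l + 1 - 1 - 0) = E * (A + E) ^ l := by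
      simp
    rw [h0, pow_succ']
    abel

/-- if `N` is a sub-multiplicative matrix norm,
`Σ_l N(A^l) = C_A < ∞` and `N(Â − A) · C_A < 1`, then the series
`Σ_l N(Â^l)` converges and is bounded by `C_A / (1 − N(Â − A) C_A)`. -/
theorem neumann_series_perturbation (d : ℕ) (N : Matrix (Fin d) (Fin d) ℝ → ℝ)
    (hN_nonneg : ∀ M, 0 ≤ N M)
    (hN_add : ∀ M₁ M₂, N (M₁ + M₂) ≤ N M₁ + N M₂)
    (hN_smul : ∀ (c : ℝ) M, N (c • M) = |c| * N M)
    (hN_mul : ∀ M₁ M₂, N (M₁ * M₂) ≤ N M₁ * N M₂)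
    (A Ahat : Matrix (Fin d) (Fin d) ℝ) (CA : ℝ)
    (hsum : HasSum (fun l : ℕ => N (A ^ l)) CA)
    (hsmall : N (Ahat - A) * CA < 1) :
    Summable (fun l : ℕ => N (Ahat ^ l)) ∧
      (∑' l : ℕ, N (Ahat ^ l)) ≤ CA / (1 - N (Ahat - A) * CA) := by
  set a : ℕ → ℝ := fun l => N (A ^ l) with ha
  set b : ℕ → ℝ := fun l => N (Ahat ^ l) with hbdef
  set ε : ℝ := N (Ahat - A) with hε
  have hεnn : 0 ≤ ε := hN_nonneg _
  have hN_zero : N 0 = 0 := by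
    have := hN_smul 0 0
    simpa using this
  have hN_sum : ∀ (n : ℕ) (f : ℕ → Matrix (Fin d) (Fin d) ℝ),
      N (∑ i ∈ range n, f i) ≤ ∑ i ∈ range n, N (f i) := by
    intro n f
    induction n with
    | zero => simp [hN_zero]
    | succ n ih =>
      rw [sum_range_succ, sum_range_succ]
      exact le_trans (hN_add _ _) (by linarith)
  have hAE : A + (Ahat - A) = Ahat := by abel
  -- the key termwise bound
  have hb : ∀ l, b l ≤ a l + ε * ∑ i ∈ range l, a i * b (l - 1 - i) := by
    intro l
    have hex := pow_expand' A (Ahat - A) l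
    rw [hAE] at hex
    calc b l = N (A ^ l + ∑ i ∈ range l, A ^ i * (Ahat - A) * Ahat ^ (l - 1 - i)) := by
          show N (Ahat ^ l) = _
          rw [hex]
      _ ≤ a l + N (∑ i ∈ range l, A ^ i * (Ahat - A) * Ahat ^ (l - 1 - i)) := hN_add _ _
      _ ≤ a l + ∑ i ∈ range l, N (A ^ i * (Ahat - A) * Ahat ^ (l - 1 - i)) := by
          have := hN_sum l (fun i => A ^ i * (Ahat - A) * Ahat ^ (l - 1 - i))
          linarith
      _ ≤ a l + ∑ i ∈ range l, ε * (a i * b (l - 1 - i)) := by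
          gcongr with i hi
          calc N (A ^ i * (Ahat - A) * Ahat ^ (l - 1 - i))
              ≤ N (A ^ i * (Ahat - A)) * N (Ahat ^ (l - 1 - i)) := hN_mul _ _
            _ ≤ (N (A ^ i) * ε) * N (Ahat ^ (l - 1 - i)) := by
                have := hN_mul (A ^ i) (Ahat - A)
                exact mul_le_mul_of_nonneg_right this (hN_nonneg _)
            _ = ε * (a i * b (l - 1 - i)) := by ring
      _ = a l + ε * ∑ i ∈ range l, a i * b (l - 1 - i) := by rw [mul_sum]
  have hann : ∀ l, 0 ≤ a l := fun l => hN_nonneg _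
  have hbnn : ∀ l, 0 ≤ b l := fun l => hN_nonneg _
  have hCA : 0 ≤ CA := hsum.nonneg hann
  have hpart : ∀ n, ∑ l ∈ range n, a l ≤ CA :=
    fun n => sum_le_hasSum (range n) (fun i _ => hann i) hsum
  have hden : 0 < 1 - ε * CA := by linarith
  -- the double-sum bound
  have hdouble : ∀ n, ∑ l ∈ range n, ∑ i ∈ range l, a i * b (l - 1 - i)
      ≤ CA * ∑ k ∈ range n, b k := by
    intro n
    match n with
    | 0 => simp
    | Nat.succ m =>
      calc ∑ l ∈ range (m + 1), ∑ i ∈ range l, a i * b (l - 1 - i)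
          = ∑ j ∈ range m, ∑ i ∈ range (j + 1), a i * b (j - i) := by
            rw [sum_range_succ' (fun l => ∑ i ∈ range l, a i * b (l - 1 - i))]
            simp
        _ ≤ ∑ j ∈ range (m + 1), ∑ i ∈ range (j + 1), a i * b (j - i) := by
            apply sum_le_sum_of_subset_of_nonneg (range_subset_range.2 (Nat.le_succ m))
            intro j _ _
            exact sum_nonneg fun i _ => mul_nonneg (hann i) (hbnn _)
        _ = ∑ j ∈ range (m + 1), ∑ k ∈ range (m + 1 - j), a j * b k :=
            sum_range_diag_flip (m + 1) (fun i k => a i * b k)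
        _ ≤ ∑ j ∈ range (m + 1), ∑ k ∈ range (m + 1), a j * b k := by
            gcongr with j hj
            · exact fun k _ _ => mul_nonneg (hann j) (hbnn k)
            · omega
        _ = (∑ j ∈ range (m + 1), a j) * ∑ k ∈ range (m + 1), b k := by
            rw [sum_mul]
            exact sum_congr rfl fun j _ => by rw [mul_sum]
        _ ≤ CA * ∑ k ∈ range (m + 1), b k := by
            apply mul_le_mul_of_nonneg_right (hpart _)
            exact sum_nonneg fun k _ => hbnn k
  -- partial sum bound
  have hT : ∀ n, ∑ l ∈ range n, b l ≤ CA / (1 - ε * CA) := by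
    intro n
    have hTn : ∑ l ∈ range n, b l ≤ CA + ε * (CA * ∑ l ∈ range n, b l) := by
      calc ∑ l ∈ range n, b l
          ≤ ∑ l ∈ range n, (a l + ε * ∑ i ∈ range l, a i * b (l - 1 - i)) :=
            sum_le_sum fun l _ => hb l
        _ = (∑ l ∈ range n, a l)
            + ε * ∑ l ∈ range n, ∑ i ∈ range l, a i * b (l - 1 - i) := by
            rw [sum_add_distrib, mul_sum]
        _ ≤ CA + ε * (CA * ∑ l ∈ range n, b l) := by
            have := hdouble n
            have h2 : ε * (∑ l ∈ range n, ∑ i ∈ range l, a i * b (l - 1 - i))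
                ≤ ε * (CA * ∑ l ∈ range n, b l) := mul_le_mul_of_nonneg_left this hεnn
            have := hpart n
            linarith
    rw [le_div_iff₀ hden]
    nlinarith [hTn]
  exact ⟨summable_of_sum_range_le hbnn hT,
    Real.tsum_le_of_sum_range_le hbnn hT⟩
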